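/- Extension to all countable structures: let M be the Fraïssé limit of a finite relational vocabulary L_Ext (every countable L_Ext-structure embeds into M, and M is ultrahomogeneous). Then every exchangeable L_Int-distribution P_M over M extends uniquely to a projective family of distributions on all countable L_Ext-structures: there is a unique assignment D ↦ P_D of probability measures on the local σ-algebra of L_Int-expansions of D (for each countable L_Ext-structure D) such that P_M is the given distribution and for every embedding ι : D' ↪ D between countable L_Ext-structures and every L_Int-expansion X of a finite substructure of D', P_{D'}(D'_X) = P_D(D_{ι(X)}). The extension is given by P_D(D_X) := P_M(M_{f(X)}) for any embedding f : D ↪ M, well-defined by ultrahomogeneity. -/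

import Mathlib

open MeasureTheory

/-- An `L`-structure on domain `D`: an interpretation of each relation symbol `R`
(of arity `ar R`) as a set of `ar R`-tuples from `D`. -/
def Struc (L : Type) (ar : L → ℕ) (D : Type) : Type :=
  ∀ R : L, (Fin (ar R) → D) → Prop

/-- `ω` (a structure on `D`) extends the image of `X` (a structure on `D'`) along the
injection `ι`; equivalently, `ι` is an embedding of structures from `X` to `ω`. -/
def ExtendsAlong {L : Type} {ar : L → ℕ} {D' D : Type} (ι : D' ↪ D)
    (X : Struc L ar D') (ω : Struc L ar D) : Prop :=
  ∀ (R : L) (s : Fin (ar R) → D'), ω R (fun i => ι (s i)) ↔ X R s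

/-- Transport of a structure along a bijection. -/
def Struc.map {L : Type} {ar : L → ℕ} {D D' : Type} (e : D ≃ D')
    (X : Struc L ar D) : Struc L ar D' :=
  fun R t => X R (fun i => e.symm (t i))

/-- The reduct of a structure to a subvocabulary `E`. -/
def reduct {L : Type} {ar : L → ℕ} (E : Set L) {D : Type} (X : Struc L ar D) :
    Struc ↥E (fun R => ar ↑R) D :=
  fun R t => X ↑R t

/-- A family of distributions indexed by all finite sets is projective if marginals
are invariant under injections. -/
def Projective {L : Type} {ar : L → ℕ}
    (P : ∀ (D : Type) [Fintype D], PMF (Struc L ar D)) : Prop :=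
  ∀ (D' D : Type) [Fintype D'] [Fintype D] (ι : D' ↪ D) (X : Struc L ar D'),
    P D' X = (P D).toOuterMeasure {ω | ExtendsAlong ι X ω}

/-- A structured (`S`-input, `T`-output) family of distributions is projective if
marginals are invariant under embeddings of input structures. -/
def ProjFam {S T : Type} {arS : S → ℕ} {arT : T → ℕ}
    (P : ∀ (D : Type) [Fintype D], Struc S arS D → PMF (Struc T arT D)) : Prop :=
  ∀ (D' D : Type) [Fintype D'] [Fintype D] (ι : D' ↪ D)
    (A' : Struc S arS D') (A : Struc S arS D), ExtendsAlong ι A' A →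
    ∀ X : Struc T arT D',
      P D' A' X = (P D A).toOuterMeasure {ω | ExtendsAlong ι X ω}

/-- The space of `L_Int`-expansions of an `L_Ext`-structure `A` on a domain `D`. -/
def ExpSpaceD (L : Type) (ar : L → ℕ) (E : Set L) (D : Type)
    (A : Struc ↥E (fun R => ar ↑R) D) : Type :=
  {ω : Struc L ar D // reduct E ω = A}

/-- The cylinder subset of expansions of `A` extending the finite structure `X`
along `ι`. -/
def CylD {L : Type} {ar : L → ℕ} {E : Set L} {D : Type}
    (A : Struc ↥E (fun R => ar ↑R) D) {n : ℕ} (ι : Fin n ↪ D)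
    (X : Struc L ar (Fin n)) : Set (ExpSpaceD L ar E D A) :=
  {ω | ExtendsAlong ι X ω.1}

/-- The local σ-algebra on the expansions of `A`, generated by the cylinder sets. -/
instance expMSD (L : Type) (ar : L → ℕ) (E : Set L) (D : Type)
    (A : Struc ↥E (fun R => ar ↑R) D) : MeasurableSpace (ExpSpaceD L ar E D A) :=
  MeasurableSpace.generateFrom
    {S | ∃ (n : ℕ) (ι : Fin n ↪ D) (X : Struc L ar (Fin n)), S = CylD A ι X}

/-- `e` is an automorphism of the `L_Ext`-structure `M` on `ℕ`. -/
def IsAutOf {L : Type} {ar : L → ℕ} {E : Set L}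
    (M : Struc ↥E (fun R => ar ↑R) ℕ) (e : ℕ ≃ ℕ) : Prop :=
  ∀ (R : ↥E) (t : Fin (ar ↑R) → ℕ), M R (fun i => e (t i)) ↔ M R t

namespace Stmt13Aux

variable {L : Type} {ar : L → ℕ} {E : Set L}

/-- Pullback of a structure along a function. -/
def pull {D' D : Type} (f : D' → D) (ω : Struc L ar D) : Struc L ar D' :=
  fun R s => ω R (fun i => f (s i))

lemma extendsAlong_iff {D' D : Type} (ι : D' ↪ D) (X : Struc L ar D')
    (ω : Struc L ar D) : ExtendsAlong ι X ω ↔ pull ι ω = X := by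
  constructor
  · intro h; funext R s; exact propext (h R s)
  · intro h R s; rw [← h]; exact Iff.rfl

lemma cylD_eq {D : Type} (A : Struc ↥E (fun R => ar ↑R) D) {n : ℕ} (ι : Fin n ↪ D)
    (X : Struc L ar (Fin n)) :
    CylD A ι X = (fun ω : ExpSpaceD L ar E D A => pull ι ω.1) ⁻¹' {X} := by
  ext ω; exact extendsAlong_iff ι X ω.1

lemma measurableSet_cylD {D : Type} (A : Struc ↥E (fun R => ar ↑R) D) {n : ℕ}
    (ι : Fin n ↪ D) (X : Struc L ar (Fin n)) : MeasurableSet (CylD A ι X) :=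
  MeasurableSpace.measurableSet_generateFrom ⟨n, ι, X, rfl⟩

/-- Restriction of expansions along an embedding of the base structures. -/
def resExp {D' D : Type} (ι : D' ↪ D) {A' : Struc ↥E (fun R => ar ↑R) D'}
    {A : Struc ↥E (fun R => ar ↑R) D} (h : ExtendsAlong ι A' A)
    (ω : ExpSpaceD L ar E D A) : ExpSpaceD L ar E D' A' :=
  ⟨pull ι ω.1, by
    funext R s
    show ω.1 ↑R (fun i => ι (s i)) = A' R s
    have h2 : ω.1 ↑R (fun i => ι (s i)) = A R (fun i => ι (s i)) :=
      congrFun (congrFun ω.2 R) _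
    exact h2.trans (propext (h R s))⟩

lemma resExp_preimage_cylD {D' D : Type} (ι : D' ↪ D)
    {A' : Struc ↥E (fun R => ar ↑R) D'} {A : Struc ↥E (fun R => ar ↑R) D}
    (h : ExtendsAlong ι A' A) {n : ℕ} (j : Fin n ↪ D') (X : Struc L ar (Fin n)) :
    resExp ι h ⁻¹' CylD A' j X = CylD A (j.trans ι) X := rfl

lemma measurable_resExp {D' D : Type} (ι : D' ↪ D)
    {A' : Struc ↥E (fun R => ar ↑R) D'} {A : Struc ↥E (fun R => ar ↑R) D}
    (h : ExtendsAlong ι A' A) : Measurable (resExp (L := L) (ar := ar) ι h) := by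
  apply measurable_generateFrom
  rintro S ⟨n, j, X, rfl⟩
  rw [resExp_preimage_cylD]
  exact measurableSet_cylD A (j.trans ι) X

lemma exists_common {D : Type} {n m : ℕ} (ι : Fin n ↪ D) (κ : Fin m ↪ D) :
    ∃ (k : ℕ) (θ : Fin k ↪ D) (u : Fin n → Fin k) (v : Fin m → Fin k),
      (∀ i, θ (u i) = ι i) ∧ (∀ i, θ (v i) = κ i) := by
  classical
  have hfin : (Set.range ι ∪ Set.range κ).Finite :=
    (Set.finite_range _).union (Set.finite_range _)
  haveI : Fintype ↥(Set.range ι ∪ Set.range κ) := hfin.fintype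
  let e := Fintype.equivFin ↥(Set.range ι ∪ Set.range κ)
  refine ⟨_, ⟨fun i => ((e.symm i : ↥(Set.range ι ∪ Set.range κ)) : D), ?_⟩,
    fun i => e ⟨ι i, Or.inl ⟨i, rfl⟩⟩, fun i => e ⟨κ i, Or.inr ⟨i, rfl⟩⟩, ?_, ?_⟩
  · intro a b hab
    exact e.symm.injective (Subtype.val_injective hab)
  · intro i; exact congrArg Subtype.val (e.symm_apply_apply _)
  · intro i; exact congrArg Subtype.val (e.symm_apply_apply _)

lemma pull_comp {D : Type} {n k : ℕ} (θ : Fin k ↪ D) (u : Fin n → Fin k)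
    (ι : Fin n ↪ D) (hu : ∀ i, θ (u i) = ι i) (ω : Struc L ar D) :
    pull ι ω = pull u (pull θ ω) := by
  funext R s
  show ω R (fun i => ι (s i)) = ω R (fun i => θ (u (s i)))
  congr 1
  funext i
  rw [hu]

/-- The π-system of preimage sets of finite restrictions. -/
def PiSys (D : Type) (A : Struc ↥E (fun R => ar ↑R) D) :
    Set (Set (ExpSpaceD L ar E D A)) :=
  {S | ∃ (n : ℕ) (ι : Fin n ↪ D) (𝒮 : Set (Struc L ar (Fin n))),
    S = (fun ω : ExpSpaceD L ar E D A => pull ι ω.1) ⁻¹' 𝒮}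

lemma isPiSystem_piSys (D : Type) (A : Struc ↥E (fun R => ar ↑R) D) :
    IsPiSystem (PiSys (L := L) (ar := ar) D A) := by
  rintro S ⟨n, ι, 𝒮, rfl⟩ T ⟨m, κ, 𝒯, rfl⟩ -
  obtain ⟨k, θ, u, v, hu, hv⟩ := exists_common ι κ
  refine ⟨k, θ, (pull u ⁻¹' 𝒮) ∩ (pull v ⁻¹' 𝒯), ?_⟩
  ext ω
  show pull ι ω.1 ∈ 𝒮 ∧ pull κ ω.1 ∈ 𝒯 ↔ _
  rw [pull_comp θ u ι hu, pull_comp θ v κ hv]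
  exact Iff.rfl

variable [Fintype L]

instance strucFinite (n : ℕ) : Finite (Struc L ar (Fin n)) := by
  unfold Struc; infer_instance

lemma preimage_eq_iUnion {D : Type} (A : Struc ↥E (fun R => ar ↑R) D) {n : ℕ}
    (ι : Fin n ↪ D) (𝒮 : Set (Struc L ar (Fin n))) :
    (fun ω : ExpSpaceD L ar E D A => pull ι ω.1) ⁻¹' 𝒮
      = ⋃ X : 𝒮, CylD A ι (X : Struc L ar (Fin n)) := by
  ext ω
  simp only [Set.mem_preimage, Set.mem_iUnion, cylD_eq, Set.mem_singleton_iff]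
  exact ⟨fun h => ⟨⟨_, h⟩, rfl⟩, fun ⟨X, hX⟩ => hX ▸ X.2⟩

lemma expMSD_eq_generateFrom (D : Type) (A : Struc ↥E (fun R => ar ↑R) D) :
    (expMSD L ar E D A) = MeasurableSpace.generateFrom (PiSys D A) := by
  apply le_antisymm
  · apply MeasurableSpace.generateFrom_le
    rintro S ⟨n, ι, X, rfl⟩
    exact MeasurableSpace.measurableSet_generateFrom ⟨n, ι, {X}, cylD_eq A ι X⟩
  · apply MeasurableSpace.generateFrom_le
    rintro S ⟨n, ι, 𝒮, rfl⟩
    rw [preimage_eq_iUnion]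
    exact MeasurableSet.iUnion fun X => measurableSet_cylD A ι X

lemma disjoint_cyl {D : Type} (A : Struc ↥E (fun R => ar ↑R) D) {n : ℕ}
    (ι : Fin n ↪ D) (𝒮 : Set (Struc L ar (Fin n))) :
    Pairwise (Function.onFun Disjoint fun X : 𝒮 => CylD A ι (X : Struc L ar (Fin n))) := by
  intro X Y hXY
  simp only [Function.onFun, cylD_eq]
  apply Disjoint.preimage
  rw [Set.disjoint_singleton]
  exact fun h => hXY (Subtype.ext h)

lemma measure_ext_cyl {D : Type} (A : Struc ↥E (fun R => ar ↑R) D)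
    (μ ν : Measure (ExpSpaceD L ar E D A)) [IsProbabilityMeasure μ]
    [IsProbabilityMeasure ν]
    (h : ∀ (n : ℕ) (ι : Fin n ↪ D) (X : Struc L ar (Fin n)),
      μ (CylD A ι X) = ν (CylD A ι X)) : μ = ν := by
  refine MeasureTheory.ext_of_generate_finite (PiSys D A) (expMSD_eq_generateFrom D A)
    (isPiSystem_piSys D A) ?_ (by simp)
  rintro S ⟨n, ι, 𝒮, rfl⟩
  rw [preimage_eq_iUnion,
    measure_iUnion (disjoint_cyl A ι 𝒮) (fun X => measurableSet_cylD A ι _),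
    measure_iUnion (disjoint_cyl A ι 𝒮) (fun X => measurableSet_cylD A ι _)]
  exact tsum_congr fun X => h n ι X

end Stmt13Aux

open Stmt13Aux in
/-- an exchangeable distribution over the Fraïssé limit `M` of `L_Ext`
(universal for countable structures and ultrahomogeneous) extends uniquely to a
projective family of distributions on all countable `L_Ext`-structures. -/
theorem stmt13 {L : Type} [Fintype L] (ar : L → ℕ) (E : Set L)
    (M : Struc ↥E (fun R => ar ↑R) ℕ)
    (hUniv : ∀ (D : Type) [Countable D] (A : Struc ↥E (fun R => ar ↑R) D),
      ∃ ι : D ↪ ℕ, ExtendsAlong ι A M)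
    (hHom : ∀ (D : Type) [Fintype D] (A : Struc ↥E (fun R => ar ↑R) D)
      (f g : D ↪ ℕ), ExtendsAlong f A M → ExtendsAlong g A M →
      ∃ e : ℕ ≃ ℕ, IsAutOf M e ∧ ∀ d : D, e (f d) = g d)
    (PM : Measure (ExpSpaceD L ar E ℕ M)) (hPM : IsProbabilityMeasure PM)
    (hExch : ∀ e : ℕ ≃ ℕ, IsAutOf M e →
      ∀ (n : ℕ) (ι : Fin n ↪ ℕ) (X : Struc L ar (Fin n)),
        PM (CylD M ι X) = PM (CylD M (ι.trans e.toEmbedding) X)) :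
    ∃! F : ∀ (D : Type) [Countable D] (A : Struc ↥E (fun R => ar ↑R) D),
        Measure (ExpSpaceD L ar E D A),
      (∀ (D : Type) [Countable D] (A : Struc ↥E (fun R => ar ↑R) D),
        IsProbabilityMeasure (F D A)) ∧
      F ℕ M = PM ∧
      (∀ (D' D : Type) [Countable D'] [Countable D] (ι : D' ↪ D)
        (A' : Struc ↥E (fun R => ar ↑R) D') (A : Struc ↥E (fun R => ar ↑R) D),
        ExtendsAlong ι A' A →
        ∀ (n : ℕ) (j : Fin n ↪ D') (X : Struc L ar (Fin n)),
          F D' A' (CylD A' j X) = F D A (CylD A (j.trans ι) X)) := by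
  -- invariance of PM under change of embedding of a finite structure
  have key : ∀ (n : ℕ) (j j' : Fin n ↪ ℕ),
      (∀ (R : ↥E) (s : Fin (ar ↑R) → Fin n),
        M R (fun i => j' (s i)) ↔ M R (fun i => j (s i))) →
      ∀ X : Struc L ar (Fin n), PM (CylD M j X) = PM (CylD M j' X) := by
    intro n j j' hjj' X
    obtain ⟨e, hAut, he⟩ := hHom (Fin n)
      (fun R s => M R (fun i => j (s i))) j j'
      (fun R s => Iff.rfl) (fun R s => hjj' R s)
    have hje : j.trans e.toEmbedding = j' := Function.Embedding.ext fun d => he d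
    rw [hExch e hAut n j X, hje]
  classical
  -- the extension family
  refine ⟨fun D _ A => PM.map (resExp (hUniv D A).choose (hUniv D A).choose_spec),
    ⟨?_, ?_, ?_⟩, ?_⟩
  case _ =>
    intro D _ A
    exact Measure.isProbabilityMeasure_map (measurable_resExp _ _).aemeasurable
  case _ =>
    haveI : IsProbabilityMeasure
        (PM.map (resExp (hUniv ℕ M).choose (hUniv ℕ M).choose_spec)) :=
      Measure.isProbabilityMeasure_map (measurable_resExp _ _).aemeasurable
    apply measure_ext_cyl
    intro n j X
    rw [Measure.map_apply (measurable_resExp _ _) (measurableSet_cylD M j X),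
      resExp_preimage_cylD]
    exact key n (j.trans (hUniv ℕ M).choose) j
      (fun R s => ((hUniv ℕ M).choose_spec R (fun i => j (s i))).symm) X
  case _ =>
    intro D' D _ _ ι A' A hext n j X
    rw [Measure.map_apply (measurable_resExp _ _) (measurableSet_cylD A' j X),
      resExp_preimage_cylD,
      Measure.map_apply (measurable_resExp _ _) (measurableSet_cylD A (j.trans ι) X),
      resExp_preimage_cylD]
    refine key n (j.trans (hUniv D' A').choose) ((j.trans ι).trans (hUniv D A).choose)
      (fun R s => ?_) X
    calc M R (fun i => (hUniv D A).choose (ι (j (s i))))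
        ↔ A R (fun i => ι (j (s i))) := (hUniv D A).choose_spec R _
      _ ↔ A' R (fun i => j (s i)) := hext R _
      _ ↔ M R (fun i => (hUniv D' A').choose (j (s i))) :=
          ((hUniv D' A').choose_spec R _).symm
  case _ =>
    rintro G ⟨hGp, hGM, hGproj⟩
    funext D inst A
    haveI := hGp D A
    haveI : IsProbabilityMeasure
        (PM.map (resExp (hUniv D A).choose (hUniv D A).choose_spec)) :=
      Measure.isProbabilityMeasure_map (measurable_resExp _ _).aemeasurable
    apply measure_ext_cyl
    intro n j X
    rw [hGproj D ℕ (hUniv D A).choose A M (hUniv D A).choose_spec n j X, hGM,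
      Measure.map_apply (measurable_resExp _ _) (measurableSet_cylD A j X),
      resExp_preimage_cylD]
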